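/- Let y_1, …, y_m be distinct positive real numbers. Then there exists α ∈ [0,1] such that the real numbers cos(α y_1), …, cos(α y_m) are linearly independent over the field of rationals, i.e. for every (c_1, …, c_m) ∈ ℚ^m ∖ {0} one has Σ_{j=1}^{m} c_j cos(α y_j) ≠ 0. -/

import Mathlib

open Real Set Filter Topology Cardinal

/-- `α ↦ cos (α * a)` is real-analytic. -/
lemma analyticAt_cos_mul (a x : ℝ) : AnalyticAt ℝ (fun α : ℝ => Real.cos (α * a)) x := by
  have h1 : AnalyticAt ℝ (fun α : ℝ => (α : ℂ)) x := Complex.ofRealCLM.analyticAt x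
  have h2 : AnalyticAt ℝ (fun α : ℝ => (α : ℂ) * ((a : ℂ) * Complex.I)) x :=
    h1.mul analyticAt_const
  have hexp : ∀ z : ℂ, AnalyticAt ℝ Complex.exp z := fun z =>
    (analyticOnNhd_cexp z (mem_univ z)).restrictScalars
  have h3 : AnalyticAt ℝ (fun α : ℝ => Complex.exp ((α : ℂ) * ((a:ℂ) * Complex.I))) x :=
    (hexp _).comp h2
  have h2' : AnalyticAt ℝ (fun α : ℝ => -((α : ℂ) * ((a : ℂ) * Complex.I))) x := h2.neg
  have h4 : AnalyticAt ℝ (fun α : ℝ => Complex.exp (-((α : ℂ) * ((a:ℂ) * Complex.I)))) x :=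
    (hexp _).comp h2'
  have h5 : AnalyticAt ℝ (fun α : ℝ =>
      ((Complex.exp ((α : ℂ) * ((a:ℂ) * Complex.I)) +
        Complex.exp (-((α : ℂ) * ((a:ℂ) * Complex.I)))) / 2).re) x :=
    Complex.reCLM.analyticAt _ |>.comp ((h3.add h4).div analyticAt_const (by norm_num))
  apply h5.congr
  apply Filter.Eventually.of_forall
  intro t
  have : ((t : ℂ) * ((a:ℂ) * Complex.I)) = ((t * a : ℝ) : ℂ) * Complex.I := by push_cast; ring
  show ((Complex.exp ((t:ℂ) * ((a:ℂ) * Complex.I)) +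
      Complex.exp (-((t:ℂ) * ((a:ℂ) * Complex.I)))) / 2).re = Real.cos (t * a)
  have hc : Complex.cos ((t * a : ℝ) : ℂ) =
      (Complex.exp (((t * a : ℝ):ℂ) * Complex.I) +
        Complex.exp ((-((t * a : ℝ):ℂ)) * Complex.I)) / 2 := rfl
  rw [this, show -(((t * a : ℝ):ℂ) * Complex.I) = (-((t * a : ℝ):ℂ)) * Complex.I
      from (neg_mul _ _).symm, ← hc, Complex.cos_ofReal_re]

/-- If a real linear combination of the functions `cos (· * y j)` with distinct positive
frequencies vanishes identically, all coefficients are zero. -/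
lemma coeffs_eq_zero_of_sum_cos {m : ℕ} (y : Fin m → ℝ) (hy : Function.Injective y)
    (hypos : ∀ j, 0 < y j) (a : Fin m → ℝ)
    (h : ∀ x : ℝ, ∑ j, a j * Real.cos (x * y j) = 0) : a = 0 := by
  -- iterate double differentiation
  have key : ∀ k : ℕ, ∀ x : ℝ, ∑ j, (a j * (y j ^ 2) ^ k) * Real.cos (x * y j) = 0 := by
    intro k
    induction k with
    | zero => simpa using h
    | succ k ih =>
      set b : Fin m → ℝ := fun j => a j * (y j ^ 2) ^ k with hb
      -- first derivative: ∑ (b j * y j) * sin (x * y j) = 0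
      have h1 : ∀ x : ℝ, ∑ j, (b j * y j) * Real.sin (x * y j) = 0 := by
        intro x
        have hFeq : (fun x : ℝ => ∑ j, b j * Real.cos (x * y j)) = fun _ => (0:ℝ) :=
          funext ih
        have hd : HasDerivAt (fun x : ℝ => ∑ j, b j * Real.cos (x * y j))
            (∑ j, -((b j * y j) * Real.sin (x * y j))) x := by
          apply HasDerivAt.fun_sum
          intro j _
          have hlin : HasDerivAt (fun x : ℝ => x * y j) (y j) x := hasDerivAt_mul_const _
          have hcos : HasDerivAt (fun x : ℝ => Real.cos (x * y j))
              (-Real.sin (x * y j) * y j) x := by have := (Real.hasDerivAt_cos (x * y j)).comp x hlin; exact this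
          have := hcos.const_mul (b j)
          refine this.congr_deriv ?_
          ring
        rw [hFeq] at hd
        have h0 : HasDerivAt (fun _ : ℝ => (0:ℝ)) 0 x := hasDerivAt_const x 0
        have := hd.unique h0
        have h2 : ∑ j, (b j * y j) * Real.sin (x * y j)
            = -∑ j, -((b j * y j) * Real.sin (x * y j)) := by
          rw [Finset.sum_neg_distrib, neg_neg]
        rw [h2, this, neg_zero]
      -- second derivative
      intro x
      have hGeq : (fun x : ℝ => ∑ j, (b j * y j) * Real.sin (x * y j)) = fun _ => (0:ℝ) :=
        funext h1
      have hd : HasDerivAt (fun x : ℝ => ∑ j, (b j * y j) * Real.sin (x * y j))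
          (∑ j, ((b j * y j ^ 2) * Real.cos (x * y j))) x := by
        apply HasDerivAt.fun_sum
        intro j _
        have hlin : HasDerivAt (fun x : ℝ => x * y j) (y j) x := hasDerivAt_mul_const _
        have hsin : HasDerivAt (fun x : ℝ => Real.sin (x * y j))
            (Real.cos (x * y j) * y j) x := by have := (Real.hasDerivAt_sin (x * y j)).comp x hlin; exact this
        have := hsin.const_mul (b j * y j)
        refine this.congr_deriv ?_
        ring
      rw [hGeq] at hd
      have h0 : HasDerivAt (fun _ : ℝ => (0:ℝ)) 0 x := hasDerivAt_const x 0
      have hzero := hd.unique h0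
      calc ∑ j, (a j * (y j ^ 2) ^ (k+1)) * Real.cos (x * y j)
          = ∑ j, ((b j * y j ^ 2) * Real.cos (x * y j)) := by
            apply Finset.sum_congr rfl
            intro j _
            rw [hb]
            ring
        _ = 0 := hzero
  -- evaluate at 0 and use Vandermonde
  have h2 : ∀ i : Fin m, ∑ j, a j * ((y j ^ 2) ^ (i : ℕ)) = 0 := by
    intro i
    have := key i 0
    simpa using this
  have hinj : Function.Injective (fun j => y j ^ 2) := by
    intro i j hij
    apply hy
    simp only at hij
    nlinarith [hypos i, hypos j, sq_nonneg (y i - y j), sq_nonneg (y i + y j)]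
  exact Matrix.eq_zero_of_forall_pow_sum_mul_pow_eq_zero hinj h2

/-- The zero set in `ℝ` of a not-identically-zero real-analytic function is countable. -/
lemma countable_zero_set_of_analytic (F : ℝ → ℝ) (hF : ∀ x, AnalyticAt ℝ F x)
    (hne : ¬ (∀ x : ℝ, F x = 0)) : {x : ℝ | F x = 0}.Countable := by
  set Z : Set ℝ := {x : ℝ | F x = 0} with hZ
  have hdisc : DiscreteTopology Z := by
    rw [discreteTopology_subtype_iff]
    intro x hx
    rcases (hF x).eventually_eq_zero_or_eventually_ne_zero with hcase | hcase
    · exfalso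
      apply hne
      have hfreq : ∃ᶠ z in 𝓝[≠] x, F z = 0 :=
        ((hcase.filter_mono nhdsWithin_le_nhds).frequently)
      have hAO : AnalyticOnNhd ℝ F Set.univ := fun z _ => hF z
      have := hAO.eqOn_zero_of_preconnected_of_frequently_eq_zero
        isPreconnected_univ (mem_univ x) hfreq
      intro z
      exact this (mem_univ z)
    · rw [Filter.inf_principal_eq_bot]
      filter_upwards [hcase] with z hz
      simpa [hZ] using hz
  have hlin : IsLindelof Z := HereditarilyLindelof_LindelofSets Z
  exact hlin.countable hdisc

/-- For distinct positive reals `y 1, …, y m` there exists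
`α ∈ [0,1]` such that `cos (α * y 1), …, cos (α * y m)` are linearly independent over
the field of rationals. -/
theorem exists_alpha_cos_rat_linearIndependent
    (m : ℕ) (y : Fin m → ℝ) (hy : Function.Injective y) (hypos : ∀ j, 0 < y j) :
    ∃ α ∈ Set.Icc (0:ℝ) 1, ∀ c : Fin m → ℚ, c ≠ 0 →
      ∑ j, (c j : ℝ) * Real.cos (α * y j) ≠ 0 := by
  set Bad : Set ℝ := ⋃ c ∈ {c : Fin m → ℚ | c ≠ 0},
    {α : ℝ | ∑ j, (c j : ℝ) * Real.cos (α * y j) = 0} with hBad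
  have hcnt : Bad.Countable := by
    apply Set.Countable.biUnion (Set.to_countable _)
    intro c hc
    apply countable_zero_set_of_analytic
    · intro x
      apply Finset.analyticAt_fun_sum
      intro j _
      exact analyticAt_const.mul (analyticAt_cos_mul (y j) x)
    · intro hall
      have : (fun j : Fin m => ((c j : ℝ))) = 0 :=
        coeffs_eq_zero_of_sum_cos y hy hypos _ hall
      apply hc
      funext j
      have h0 : ((c j : ℝ)) = 0 := by simpa using congrFun this j
      exact_mod_cast h0
  have hicc : ¬ (Set.Icc (0:ℝ) 1).Countable := by
    intro h
    have h1 : #(Set.Icc (0:ℝ) 1) ≤ Cardinal.aleph0 := by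
      rw [Cardinal.mk_le_aleph0_iff]
      exact h.to_subtype
    rw [Cardinal.mk_Icc_real zero_lt_one] at h1
    exact absurd h1 (not_le.mpr Cardinal.aleph0_lt_continuum)
  have hsub : ¬ (Set.Icc (0:ℝ) 1 ⊆ Bad) := fun hsub => hicc (hcnt.mono hsub)
  rw [Set.not_subset] at hsub
  obtain ⟨α, hα, hαBad⟩ := hsub
  refine ⟨α, hα, fun c hc hsum => hαBad ?_⟩
  rw [hBad]
  exact Set.mem_biUnion hc hsum
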